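/- Fix k ≥ 1 and p, q ∈ D(k). Then, as n → ∞ (n an integer, n ≥ 2), n^k · W_{kn}(p,q) converges to 1 if p = q and to 0 if p ≠ q, where W_{kn} = G_{kn}⁻¹ is the Weingarten matrix. -/

import Mathlib

open scoped BigOperators

/-- Non-crossing pair partitions of {1,…,2k}: fixed-point-free non-crossing
involutions of `Fin (2*k)`. -/
def NCPair (k : ℕ) : Type :=
  {p : Equiv.Perm (Fin (2 * k)) //
    (∀ x, p (p x) = x) ∧ (∀ x, p x ≠ x) ∧
    ∀ a b c d : Fin (2 * k), a < b → b < c → c < d → p a = c → p b = d → False}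

instance (k : ℕ) : Fintype (NCPair k) := by unfold NCPair; infer_instance

instance (k : ℕ) : DecidableEq (NCPair k) := by unfold NCPair; infer_instance

/-- `loops p q`: the number of loops obtained by closing the composed diagram,
i.e. the number of orbits of the subgroup generated by `p` and `q` on `Fin (2*k)`. -/
noncomputable def loops {k : ℕ} (p q : NCPair k) : ℕ :=
  Nat.card (MulAction.orbitRel.Quotient
    (↥(Subgroup.closure ({p.1, q.1} : Set (Equiv.Perm (Fin (2 * k)))))) (Fin (2 * k)))

/-- The Gram matrix `G_{kn}(p,q) = n^{l(p,q)}`. -/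
noncomputable def Gram (k n : ℕ) : Matrix (NCPair k) (NCPair k) ℝ :=
  fun p q => (n : ℝ) ^ loops p q

/-- The loop distance `d(p,q) = k - l(p,q)`. -/
noncomputable def loopDist {k : ℕ} (p q : NCPair k) : ℕ := k - loops p q

namespace NCPairAux

open MulAction

variable {k : ℕ}

abbrev SG (p q : NCPair k) : Subgroup (Equiv.Perm (Fin (2 * k))) :=
  Subgroup.closure ({p.1, q.1} : Set (Equiv.Perm (Fin (2 * k))))

lemma smul_eq_apply {G : Subgroup (Equiv.Perm (Fin (2*k)))} (g : G) (x : Fin (2*k)) :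
    g • x = g.1 x := rfl

lemma apply_mem_orbit (p q : NCPair k) (x : Fin (2*k)) :
    p.1 x ∈ MulAction.orbit ↥(SG p q) x := by
  refine ⟨⟨p.1, Subgroup.subset_closure (Set.mem_insert _ _)⟩, rfl⟩

lemma q_apply_mem_orbit (p q : NCPair k) (x : Fin (2*k)) :
    q.1 x ∈ MulAction.orbit ↥(SG p q) x := by
  refine ⟨⟨q.1, Subgroup.subset_closure (Set.mem_insert_of_mem _ rfl)⟩, rfl⟩

lemma two_le_card_orbit (p q : NCPair k) (x : Fin (2*k)) :
    2 ≤ Nat.card (MulAction.orbit ↥(SG p q) x) := by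
  have h1 : x ∈ MulAction.orbit ↥(SG p q) x := MulAction.mem_orbit_self x
  have h2 := apply_mem_orbit p q x
  have hne : p.1 x ≠ x := p.2.2.1 x
  have : Nontrivial (MulAction.orbit ↥(SG p q) x) :=
    ⟨⟨⟨_, h2⟩, ⟨_, h1⟩, by simpa [Subtype.ext_iff] using hne⟩⟩
  have := Finite.one_lt_card_iff_nontrivial.mpr this
  omega

instance (p q : NCPair k) : Finite (MulAction.orbitRel.Quotient ↥(SG p q) (Fin (2*k))) :=
  Quotient.finite _

lemma card_sum (p q : NCPair k)
    [Fintype (MulAction.orbitRel.Quotient ↥(SG p q) (Fin (2*k)))] :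
    2 * k = ∑ ω : MulAction.orbitRel.Quotient ↥(SG p q) (Fin (2*k)),
      Nat.card ω.orbit := by
  classical
  letI : ∀ ω : MulAction.orbitRel.Quotient ↥(SG p q) (Fin (2*k)), Fintype ω.orbit :=
    fun ω => Fintype.ofFinite _
  have e := MulAction.selfEquivSigmaOrbits' ↥(SG p q) (Fin (2*k))
  calc 2 * k = Fintype.card (Fin (2*k)) := (Fintype.card_fin _).symm
    _ = Fintype.card (Σ ω : MulAction.orbitRel.Quotient ↥(SG p q) (Fin (2*k)), ω.orbit) :=
        Fintype.card_congr e
    _ = ∑ ω : MulAction.orbitRel.Quotient ↥(SG p q) (Fin (2*k)), Nat.card ω.orbit := by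
        rw [Fintype.card_sigma]
        exact Finset.sum_congr rfl fun ω _ => Nat.card_eq_fintype_card.symm

lemma loops_le (p q : NCPair k) : loops p q ≤ k := by
  classical
  letI : Fintype (MulAction.orbitRel.Quotient ↥(SG p q) (Fin (2*k))) := Fintype.ofFinite _
  have hsum := card_sum p q
  have hlb : ∀ ω : MulAction.orbitRel.Quotient ↥(SG p q) (Fin (2*k)),
      2 ≤ Nat.card ω.orbit := by
    intro ω
    rw [MulAction.orbitRel.Quotient.orbit_eq_orbit_out _ Quotient.out_eq']
    exact two_le_card_orbit p q _
  have h2 : 2 * loops p q ≤ 2 * k := by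
    rw [hsum]
    have : ∑ ω : MulAction.orbitRel.Quotient ↥(SG p q) (Fin (2*k)), 2 ≤
        ∑ ω : MulAction.orbitRel.Quotient ↥(SG p q) (Fin (2*k)), Nat.card ω.orbit :=
      Finset.sum_le_sum fun ω _ => hlb ω
    simpa [loops, Nat.card_eq_fintype_card, Finset.sum_const, mul_comm] using this
  omega

lemma orbit_card_eq_two_of_loops_eq (p q : NCPair k) (h : loops p q = k) (x : Fin (2*k)) :
    Nat.card (MulAction.orbit ↥(SG p q) x) = 2 := by
  classical
  letI : Fintype (MulAction.orbitRel.Quotient ↥(SG p q) (Fin (2*k))) := Fintype.ofFinite _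
  have hsum := card_sum p q
  have hlb : ∀ ω : MulAction.orbitRel.Quotient ↥(SG p q) (Fin (2*k)),
      2 ≤ Nat.card ω.orbit := by
    intro ω
    rw [MulAction.orbitRel.Quotient.orbit_eq_orbit_out _ Quotient.out_eq']
    exact two_le_card_orbit p q _
  have hcard : Fintype.card (MulAction.orbitRel.Quotient ↥(SG p q) (Fin (2*k))) = k := by
    rw [← Nat.card_eq_fintype_card]; exact h
  have hall : ∀ ω : MulAction.orbitRel.Quotient ↥(SG p q) (Fin (2*k)),
      Nat.card ω.orbit = 2 := by
    by_contra hcon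
    push_neg at hcon
    obtain ⟨ω₀, hω₀⟩ := hcon
    have h3 : 3 ≤ Nat.card ω₀.orbit := by have := hlb ω₀; omega
    have hmain : ∑ ω : MulAction.orbitRel.Quotient ↥(SG p q) (Fin (2*k)),
        (if ω = ω₀ then 3 else 2) ≤ ∑ ω : MulAction.orbitRel.Quotient ↥(SG p q) (Fin (2*k)),
        Nat.card ω.orbit := by
      refine Finset.sum_le_sum ?_
      intro ω _
      by_cases hw : ω = ω₀
      · simpa [hw] using h3
      · simpa [hw] using hlb ω
    have hval : ∑ ω : MulAction.orbitRel.Quotient ↥(SG p q) (Fin (2*k)),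
        (if ω = ω₀ then 3 else 2) = 2 * k + 1 := by
      have hsplit : ∀ ω : MulAction.orbitRel.Quotient ↥(SG p q) (Fin (2*k)),
          (if ω = ω₀ then 3 else 2) = 2 + (if ω = ω₀ then 1 else 0) := by
        intro ω; split <;> rfl
      rw [Finset.sum_congr rfl (fun ω _ => hsplit ω), Finset.sum_add_distrib,
        Finset.sum_const, Finset.sum_ite_eq' Finset.univ ω₀ (fun _ => 1)]
      simp [hcard, mul_comm]
    omega
  have := hall (Quotient.mk'' x)
  rwa [MulAction.orbitRel.Quotient.orbit_mk] at this

lemma loops_eq_imp (p q : NCPair k) (h : loops p q = k) : p = q := by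
  apply Subtype.ext
  apply Equiv.ext
  intro x
  by_contra hne
  have hsub : ({x, p.1 x, q.1 x} : Set (Fin (2*k))) ⊆ MulAction.orbit ↥(SG p q) x := by
    intro y hy
    simp only [Set.mem_insert_iff, Set.mem_singleton_iff] at hy
    rcases hy with rfl | rfl | rfl
    · exact MulAction.mem_orbit_self _
    · exact apply_mem_orbit p q _
    · exact q_apply_mem_orbit p q _
  have hx1 : x ≠ p.1 x := fun hh => (p.2.2.1 x) hh.symm
  have hx2 : x ≠ q.1 x := fun hh => (q.2.2.1 x) hh.symm
  have h3 : ({x, p.1 x, q.1 x} : Set (Fin (2*k))).ncard = 3 := by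
    rw [Set.ncard_insert_of_notMem (by simp [hx1, hx2]) (Set.toFinite _), Set.ncard_pair hne]
  have hle : ({x, p.1 x, q.1 x} : Set (Fin (2*k))).ncard ≤
      (MulAction.orbit ↥(SG p q) x).ncard :=
    Set.ncard_le_ncard hsub (Set.toFinite _)
  have h2 := orbit_card_eq_two_of_loops_eq p q h x
  rw [Nat.card_coe_set_eq] at h2
  omega

lemma closure_single_apply (p : NCPair k) :
    ∀ g ∈ Subgroup.closure ({p.1} : Set (Equiv.Perm (Fin (2*k)))),
      ∀ x, g x = x ∨ g x = p.1 x := by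
  intro g hg
  refine Subgroup.closure_induction (fun y hy x => ?_) (fun x => Or.inl rfl)
    (fun a b ha hb iha ihb x => ?_) (fun a ha iha x => ?_) hg
  · rw [Set.mem_singleton_iff] at hy
    exact Or.inr (by rw [hy])
  · rw [Equiv.Perm.mul_apply]
    rcases ihb x with h | h <;> rw [h]
    · exact iha x
    · rcases iha (p.1 x) with h2 | h2
      · exact Or.inr h2
      · exact Or.inl (h2.trans (p.2.1 x))
  · rcases iha (a⁻¹ x) with h | h
    · rw [← Equiv.Perm.mul_apply, mul_inv_cancel, Equiv.Perm.one_apply] at h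
      exact Or.inl h.symm
    · rw [← Equiv.Perm.mul_apply, mul_inv_cancel, Equiv.Perm.one_apply] at h
      have h2 := congrArg p.1 h
      rw [p.2.1] at h2
      exact Or.inr h2.symm

lemma orbit_self_card (p : NCPair k) (x : Fin (2*k)) :
    Nat.card (MulAction.orbit ↥(SG p p) x) = 2 := by
  have hx1 : x ≠ p.1 x := fun hh => (p.2.2.1 x) hh.symm
  have hsub : MulAction.orbit ↥(SG p p) x ⊆ ({x, p.1 x} : Set (Fin (2*k))) := by
    rintro y ⟨⟨g, hg⟩, rfl⟩
    have hg' : g ∈ Subgroup.closure ({p.1} : Set (Equiv.Perm (Fin (2*k)))) := by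
      rwa [← Set.pair_eq_singleton p.1]
    rcases closure_single_apply p g hg' x with h | h
    · exact Set.mem_insert_iff.mpr (Or.inl h)
    · exact Set.mem_insert_iff.mpr (Or.inr (Set.mem_singleton_iff.mpr h))
  have hle : Nat.card (MulAction.orbit ↥(SG p p) x) ≤ 2 := by
    rw [Nat.card_coe_set_eq]
    calc (MulAction.orbit ↥(SG p p) x).ncard ≤ ({x, p.1 x} : Set (Fin (2*k))).ncard :=
        Set.ncard_le_ncard hsub (Set.toFinite _)
      _ = 2 := Set.ncard_pair hx1
  have := two_le_card_orbit p p x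
  omega

lemma loops_self (p : NCPair k) : loops p p = k := by
  classical
  letI : Fintype (MulAction.orbitRel.Quotient ↥(SG p p) (Fin (2*k))) := Fintype.ofFinite _
  have hsum := card_sum p p
  have hall : ∀ ω : MulAction.orbitRel.Quotient ↥(SG p p) (Fin (2*k)),
      Nat.card ω.orbit = 2 := by
    intro ω
    rw [MulAction.orbitRel.Quotient.orbit_eq_orbit_out _ Quotient.out_eq']
    exact orbit_self_card p _
  rw [Finset.sum_congr rfl (fun ω _ => hall ω), Finset.sum_const, smul_eq_mul] at hsum
  have hl : loops p p = Fintype.card (MulAction.orbitRel.Quotient ↥(SG p p) (Fin (2*k))) :=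
    Nat.card_eq_fintype_card
  simp only [Finset.card_univ] at hsum
  omega

lemma loops_lt (p q : NCPair k) (h : p ≠ q) : loops p q < k := by
  have h1 := loops_le p q
  rcases lt_or_eq_of_le h1 with h2 | h2
  · exact h2
  · exact absurd (loops_eq_imp p q h2) h

end NCPairAux

namespace NCPairAux

open Filter Matrix Topology

noncomputable def Amat (k n : ℕ) : Matrix (NCPair k) (NCPair k) ℝ :=
  (((n : ℝ) ^ k)⁻¹) • Gram k n

lemma Amat_tendsto (k : ℕ) (hk : 1 ≤ k) :
    Tendsto (fun n : ℕ => Amat k n) atTop (nhds 1) := by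
  refine tendsto_pi_nhds.mpr ?_
  intro p
  rw [tendsto_pi_nhds]
  intro q
  have hentry : ∀ n : ℕ, Amat k n p q = ((n : ℝ) ^ k)⁻¹ * (n : ℝ) ^ loops p q := by
    intro n; rfl
  by_cases hpq : p = q
  · subst hpq
    have hloop := loops_self p
    have h1 : ∀ᶠ n : ℕ in atTop, Amat k n p p = 1 := by
      filter_upwards [eventually_ge_atTop 1] with n hn
      have hn0 : (n : ℝ) ≠ 0 := Nat.cast_ne_zero.mpr (by omega)
      rw [hentry, hloop, inv_mul_cancel₀ (pow_ne_zero _ hn0)]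
    have : (1 : Matrix (NCPair k) (NCPair k) ℝ) p p = 1 := Matrix.one_apply_eq p
    rw [this]
    exact Tendsto.congr' (h1.mono fun n h => h.symm) tendsto_const_nhds
  · have hlt := loops_lt p q hpq
    set l := loops p q
    set d := k - l with hd
    have hd1 : 1 ≤ d := by omega
    have h1 : ∀ᶠ n : ℕ in atTop, ((n : ℝ) ^ d)⁻¹ = Amat k n p q := by
      filter_upwards [eventually_ge_atTop 1] with n hn
      have hn0 : (n : ℝ) ≠ 0 := Nat.cast_ne_zero.mpr (by omega)
      rw [hentry]
      have hkd : k = l + d := by omega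
      rw [hkd, pow_add, mul_inv, mul_right_comm, inv_mul_cancel₀ (pow_ne_zero _ hn0), one_mul]
    have h0 : Tendsto (fun n : ℕ => ((n : ℝ) ^ d)⁻¹) atTop (nhds 0) := by
      have : Tendsto (fun n : ℕ => (n : ℝ) ^ d) atTop atTop :=
        (tendsto_pow_atTop (by omega)).comp tendsto_natCast_atTop_atTop
      exact this.inv_tendsto_atTop
    have : (1 : Matrix (NCPair k) (NCPair k) ℝ) p q = 0 := Matrix.one_apply_ne hpq
    rw [this]
    exact Tendsto.congr' h1 h0

lemma inv_entry_eq (k n : ℕ) (hn : 1 ≤ n) (p q : NCPair k) :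
    (Amat k n)⁻¹ p q = (n : ℝ) ^ k * (Gram k n)⁻¹ p q := by
  have hN : 1 ≤ Fintype.card (NCPair k) := Fintype.card_pos_iff.mpr ⟨p⟩
  have hn0 : (n : ℝ) ≠ 0 := Nat.cast_ne_zero.mpr (by omega)
  have hc : ((n : ℝ) ^ k)⁻¹ ≠ 0 := inv_ne_zero (pow_ne_zero _ hn0)
  rw [Matrix.inv_def, Matrix.inv_def, Ring.inverse_eq_inv']
  have hdet : (Amat k n).det = (((n : ℝ) ^ k)⁻¹) ^ Fintype.card (NCPair k) * (Gram k n).det :=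
    Matrix.det_smul _ _
  have hadj : (Amat k n).adjugate =
      (((n : ℝ) ^ k)⁻¹) ^ (Fintype.card (NCPair k) - 1) • (Gram k n).adjugate :=
    Matrix.adjugate_smul _ _
  rw [hdet, hadj]
  simp only [Matrix.smul_apply, smul_eq_mul]
  set c := ((n : ℝ) ^ k)⁻¹ with hcdef
  set N := Fintype.card (NCPair k) with hNdef
  have hkey : (c ^ N)⁻¹ * c ^ (N - 1) = (n : ℝ) ^ k := by
    have h1 : c ^ N = c ^ (N - 1) * c := by
      rw [← pow_succ]
      congr 1
      omega
    rw [h1, mul_inv, mul_comm (c ^ (N-1))⁻¹, mul_assoc,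
      inv_mul_cancel₀ (pow_ne_zero _ hc), mul_one, hcdef, inv_inv]
  calc (c ^ N * (Gram k n).det)⁻¹ * (c ^ (N - 1) * (Gram k n).adjugate p q)
      = ((c ^ N)⁻¹ * c ^ (N - 1)) * ((Gram k n).det⁻¹ * (Gram k n).adjugate p q) := by
        rw [mul_inv]; ring
    _ = (n : ℝ) ^ k * ((Gram k n).det⁻¹ * (Gram k n).adjugate p q) := by rw [hkey]

end NCPairAux

/-- As n → ∞, the normalised Weingarten matrix entry n^k · W_{kn}(p,q)
converges to 1 if p = q and to 0 if p ≠ q. -/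
theorem weingarten_entry_tendsto (k : ℕ) (hk : 1 ≤ k) (p q : NCPair k) :
    Filter.Tendsto (fun n : ℕ => (n : ℝ) ^ k * (Gram k n)⁻¹ p q)
      Filter.atTop (nhds (if p = q then 1 else 0)) := by
  classical
  have hA := NCPairAux.Amat_tendsto k hk
  have hdet : Filter.Tendsto (fun n : ℕ => (NCPairAux.Amat k n).det) Filter.atTop (nhds 1) := by
    have hc : Continuous fun M : Matrix (NCPair k) (NCPair k) ℝ => M.det :=
      continuous_id.matrix_det
    have := (hc.tendsto (1 : Matrix (NCPair k) (NCPair k) ℝ)).comp hA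
    simpa [Function.comp_def] using this
  have hadj : Filter.Tendsto (fun n : ℕ => (NCPairAux.Amat k n).adjugate p q) Filter.atTop
      (nhds (if p = q then 1 else 0)) := by
    have hc : Continuous fun M : Matrix (NCPair k) (NCPair k) ℝ => M.adjugate p q :=
      (continuous_apply q).comp ((continuous_apply p).comp continuous_id.matrix_adjugate)
    have := (hc.tendsto (1 : Matrix (NCPair k) (NCPair k) ℝ)).comp hA
    simpa [Matrix.adjugate_one, Matrix.one_apply, Function.comp_def] using this
  have hmain : Filter.Tendsto (fun n : ℕ => ((NCPairAux.Amat k n).det)⁻¹ *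
      (NCPairAux.Amat k n).adjugate p q) Filter.atTop (nhds (if p = q then 1 else 0)) := by
    have := (hdet.inv₀ one_ne_zero).mul hadj
    simpa using this
  refine Filter.Tendsto.congr' ?_ hmain
  filter_upwards [Filter.eventually_ge_atTop 1] with n hn
  rw [← NCPairAux.inv_entry_eq k n hn p q, Matrix.inv_def, Ring.inverse_eq_inv',
    Matrix.smul_apply, smul_eq_mul]
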